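/- arXiv:cs/0504090 — 5 statements merged into one kernel-verified Lean document; each statement's English description precedes it below -/
import Mathlib

section
/- A partial matching on a finite poset (the basis poset of a free chain complex) is acyclic (i.e., admits no alternating cycle d(b₁) ≺ b₁ ≻ d(b₂) ≺ b₂ ≻ ... ≻ d(bₙ) ≺ bₙ ≻ d(b₁) with n ≥ 2 and all bᵢ distinct) if and only if there exists a linear extension of the poset in which, for every matched pair (a, u(a)), the element u(a) follows directly after a. -/
/-- A partial matching in the covering graph of a poset: a set of pairs `(a, b)` with
`b` covering `a`, all members of all pairs pairwise distinct. -/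
def PosetMatching {α : Type} [PartialOrder α] (M : Finset (α × α)) : Prop :=
  (∀ p ∈ M, p.1 ⋖ p.2) ∧
  ∀ p ∈ M, ∀ q ∈ M, p ≠ q → p.1 ≠ q.1 ∧ p.1 ≠ q.2 ∧ p.2 ≠ q.1 ∧ p.2 ≠ q.2

/-- An alternating cycle `d(b₁) ≺ b₁ ≻ d(b₂) ≺ b₂ ≻ ⋯ ≻ d(bₙ) ≺ bₙ ≻ d(b₁)` with
`n ≥ 2` and distinct matched pairs `(d(bᵢ), bᵢ) ∈ M` (the pair `f i` is `(d(bᵢ), bᵢ)`,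
and `bᵢ ≻ d(bᵢ₊₁)` cyclically). -/
def PosetHasAltCycle {α : Type} [PartialOrder α] (M : Finset (α × α)) : Prop :=
  ∃ n : ℕ, ∃ f : Fin (n + 2) → α × α, Function.Injective f ∧
    (∀ i, f i ∈ M) ∧ ∀ i, (f (i + 1)).1 ⋖ (f i).2

set_option linter.unusedSectionVars false

section Aux

open Relation

variable {α : Type} [PartialOrder α]

open Classical in
/-- Representative map collapsing each matched pair to its bottom element. -/
noncomputable def pcRep (M : Finset (α × α)) (x : α) : α :=
  if h : ∃ p, p ∈ M ∧ p.2 = x then h.choose.1 else x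

/-- The relation induced on representatives by covering relations. -/
def pcR (M : Finset (α × α)) (u v : α) : Prop :=
  u ≠ v ∧ ∃ x y, pcRep M x = u ∧ pcRep M y = v ∧ x ⋖ y

variable {M : Finset (α × α)}

lemma pc_snd_inj (hM : PosetMatching M) {p q : α × α} (hp : p ∈ M) (hq : q ∈ M)
    (h : p.2 = q.2) : p = q := by
  by_contra hne
  exact (hM.2 p hp q hq hne).2.2.2 h

lemma pc_fst_inj (hM : PosetMatching M) {p q : α × α} (hp : p ∈ M) (hq : q ∈ M)
    (h : p.1 = q.1) : p = q := by
  by_contra hne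
  exact (hM.2 p hp q hq hne).1 h

lemma pcRep_cases (M : Finset (α × α)) (x : α) :
    pcRep M x = x ∨ ∃ p, p ∈ M ∧ p.2 = x ∧ pcRep M x = p.1 := by
  by_cases h : ∃ p, p ∈ M ∧ p.2 = x
  · refine Or.inr ⟨h.choose, h.choose_spec.1, h.choose_spec.2, ?_⟩
    rw [pcRep, dif_pos h]
  · refine Or.inl ?_
    rw [pcRep, dif_neg h]

lemma pcRep_top (hM : PosetMatching M) {p : α × α} (hp : p ∈ M) : pcRep M p.2 = p.1 := by
  have h : ∃ q, q ∈ M ∧ q.2 = p.2 := ⟨p, hp, rfl⟩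
  rw [pcRep, dif_pos h]
  exact congrArg Prod.fst (pc_snd_inj hM h.choose_spec.1 hp h.choose_spec.2)

lemma not_top_fst (hM : PosetMatching M) {p : α × α} (hp : p ∈ M) :
    ¬ ∃ q, q ∈ M ∧ q.2 = p.1 := by
  rintro ⟨q, hq, hq2⟩
  by_cases hpq : p = q
  · exact (hM.1 p hp).ne ((hpq ▸ hq2 : p.2 = p.1)).symm
  · exact (hM.2 p hp q hq hpq).2.1 hq2.symm

lemma pcRep_fst (hM : PosetMatching M) {p : α × α} (hp : p ∈ M) : pcRep M p.1 = p.1 := by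
  rw [pcRep, dif_neg (not_top_fst hM hp)]

section Rank

variable {rk : α → ℕ}

lemma pcR_rk_le (hrk : ∀ a b : α, a ⋖ b → rk b = rk a + 1) (hM : PosetMatching M) {u v : α} (h : pcR M u v) : rk u ≤ rk v := by
  obtain ⟨hne, x, y, hx, hy, hxy⟩ := h
  have hxy' : rk y = rk x + 1 := hrk _ _ hxy
  have hu : rk u ≤ rk x := by
    rcases pcRep_cases M x with h1 | ⟨q, hq, hq2, hq1⟩
    · rw [← hx, h1]
    · have := hrk _ _ (hq2 ▸ hM.1 q hq)
      rw [← hx, hq1]; omega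
  have hv : rk y ≤ rk v + 1 := by
    rcases pcRep_cases M y with h1 | ⟨q, hq, hq2, hq1⟩
    · rw [← hy, h1]; omega
    · have := hrk _ _ (hq2 ▸ hM.1 q hq)
      rw [← hy, hq1]; omega
  omega

lemma pcR_key (hrk : ∀ a b : α, a ⋖ b → rk b = rk a + 1) (hM : PosetMatching M) {u v : α} (h : pcR M u v) (heq : rk u = rk v) :
    ∃ p, p ∈ M ∧ p.1 = v ∧ u ⋖ p.2 := by
  obtain ⟨hne, x, y, hx, hy, hxy⟩ := h
  have hxy' : rk y = rk x + 1 := hrk _ _ hxy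
  rcases pcRep_cases M y with h1 | ⟨p, hp, hp2, hp1⟩
  · -- y is not a top: impossible since then rk v = rk y = rk x + 1 > rk u
    exfalso
    have hvy : v = y := by rw [← hy, h1]
    have hu : rk u ≤ rk x := by
      rcases pcRep_cases M x with h2 | ⟨q, hq, hq2, hq1⟩
      · rw [← hx, h2]
      · have := hrk _ _ (hq2 ▸ hM.1 q hq)
        rw [← hx, hq1]; omega
    rw [hvy] at heq; omega
  · -- y is the top of pair p
    have hry : rk y = rk p.1 + 1 := hrk _ _ (hp2 ▸ hM.1 p hp)
    have hpv : p.1 = v := by rw [← hy, hp1]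
    -- x is not a top
    rcases pcRep_cases M x with h2 | ⟨q, hq, hq2, hq1⟩
    · refine ⟨p, hp, hpv, ?_⟩
      have hux : u = x := by rw [← hx, h2]
      rw [hux, hp2]; exact hxy
    · exfalso
      have hrx : rk x = rk q.1 + 1 := hrk _ _ (hq2 ▸ hM.1 q hq)
      have hux : rk u = rk q.1 := by rw [← hx, hq1]
      rw [← hpv] at heq
      omega

end Rank

section Cycle

open Relation

lemma pcR_path {u v : α} (h : Relation.TransGen (pcR M) u v) :
    ∃ k, 0 < k ∧ ∃ g : ℕ → α, g 0 = u ∧ g k = v ∧ ∀ i < k, pcR M (g i) (g (i + 1)) := by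
  induction h with
  | @single b hs =>
    refine ⟨1, one_pos, fun i => if i = 0 then u else b, by simp, by simp, ?_⟩
    intro i hi
    have : i = 0 := by omega
    subst this
    simpa using hs
  | @tail b c hub hbc ih =>
    obtain ⟨k, hk, g, hg0, hgk, hstep⟩ := ih
    refine ⟨k + 1, by omega, fun i => if i ≤ k then g i else c, by simp [hg0], by simp, ?_⟩
    intro i hi
    dsimp only
    by_cases hik : i < k
    · rw [if_pos (by omega : i ≤ k), if_pos (by omega : i + 1 ≤ k)]
      exact hstep i hik
    · have : i = k := by omega
      subst this
      rw [if_pos le_rfl, if_neg (by omega), hgk]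
      exact hbc

lemma pcR_cycle_alt {rk : α → ℕ} (hrk : ∀ a b : α, a ⋖ b → rk b = rk a + 1)
    (hM : PosetMatching M) {u : α} (h : Relation.TransGen (pcR M) u u) :
    PosetHasAltCycle M := by
  classical
  have hex : ∃ k, 0 < k ∧ ∃ g : ℕ → α, g k = g 0 ∧ ∀ i < k, pcR M (g i) (g (i + 1)) := by
    obtain ⟨k, hk, g, hg0, hgk, hstep⟩ := pcR_path h
    exact ⟨k, hk, g, by rw [hgk, hg0], hstep⟩
  set k := Nat.find hex with hkdef
  obtain ⟨hkpos, g, hgk, hstep⟩ : 0 < k ∧ ∃ g : ℕ → α, g k = g 0 ∧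
      ∀ i < k, pcR M (g i) (g (i + 1)) := Nat.find_spec hex
  have hmin : ∀ m, 0 < m → m < k →
      ¬ ∃ g' : ℕ → α, g' m = g' 0 ∧ ∀ i < m, pcR M (g' i) (g' (i + 1)) := by
    intro m hm hmk hc
    exact Nat.find_min hex hmk ⟨hm, hc⟩
  have hk2 : 2 ≤ k := by
    by_contra hlt
    have hk1 : k = 1 := by omega
    have h0 := hstep 0 (by omega)
    rw [show (0 : ℕ) + 1 = k by omega, hgk] at h0
    exact h0.1 rfl
  have hginj : ∀ i j, i < j → j < k → g i ≠ g j := by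
    intro i j hij hjk heqg
    refine hmin (j - i) (by omega) (by omega) ⟨fun t => g (i + t), ?_, ?_⟩
    · show g (i + (j - i)) = g (i + 0)
      have h1 : i + (j - i) = j := by omega
      rw [h1, Nat.add_zero]
      exact heqg.symm
    · intro t ht
      exact hstep (i + t) (by omega)
  have hmono : ∀ j, j ≤ k → ∀ i, i ≤ j → rk (g i) ≤ rk (g j) := by
    intro j
    induction j with
    | zero =>
      intro _ i hi
      have : i = 0 := by omega
      rw [this]
    | succ j ih =>
      intro hjk i hij
      rcases Nat.eq_or_lt_of_le hij with he | hlt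
      · rw [he]
      · exact le_trans (ih (by omega) i (by omega))
          (pcR_rk_le hrk hM (hstep j (by omega)))
  have hconst : ∀ i, i < k → rk (g i) = rk (g (i + 1)) := by
    intro i hi
    have h1 : rk (g i) ≤ rk (g (i + 1)) := pcR_rk_le hrk hM (hstep i hi)
    have h2 : rk (g (i + 1)) ≤ rk (g k) := hmono k le_rfl (i + 1) (by omega)
    have h3 : rk (g 0) ≤ rk (g i) := hmono i (by omega) 0 (by omega)
    rw [hgk] at h2
    omega
  have hkey : ∀ i : ℕ, ∃ p : α × α, i < k → p ∈ M ∧ p.1 = g ((i + 1) % k) ∧ g i ⋖ p.2 := by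
    intro i
    by_cases hi : i < k
    · obtain ⟨p, hp, hp1, hp2⟩ := pcR_key hrk hM (hstep i hi) (hconst i hi)
      refine ⟨p, fun _ => ⟨hp, ?_, hp2⟩⟩
      rcases Nat.lt_or_ge (i + 1) k with hlt | hge
      · rw [Nat.mod_eq_of_lt hlt]; exact hp1
      · have he : i + 1 = k := by omega
        rw [he] at hp1
        rw [hgk] at hp1
        rw [he, Nat.mod_self]; exact hp1
    · exact ⟨(g 0, g 0), fun hc => absurd hc hi⟩
  choose y hy using hkey
  have hmod : ∀ m, m < k → (m + 1) % k = if m = k - 1 then 0 else m + 1 := by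
    intro m hm
    by_cases he : m = k - 1
    · rw [if_pos he, he, show k - 1 + 1 = k by omega, Nat.mod_self]
    · rw [if_neg he, Nat.mod_eq_of_lt (by omega)]
  have hgne : ∀ a b, a < k → b < k → g a = g b → a = b := by
    intro a b ha hb hab
    by_contra hne
    rcases Nat.lt_or_ge a b with hl | hge
    · exact hginj a b hl hb hab
    · exact hginj b a (by omega) ha hab.symm
  refine ⟨k - 2, fun j => y (k - 1 - (j : ℕ)), ?_, ?_, ?_⟩
  · -- injectivity
    intro j1 j2 hf
    have hj1 : (j1 : ℕ) < k - 2 + 2 := j1.isLt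
    have hj2 : (j2 : ℕ) < k - 2 + 2 := j2.isLt
    have hm1 : k - 1 - (j1 : ℕ) < k := by omega
    have hm2 : k - 1 - (j2 : ℕ) < k := by omega
    have e1 := (hy _ hm1).2.1
    have e2 := (hy _ hm2).2.1
    have hf' : y (k - 1 - (j1 : ℕ)) = y (k - 1 - (j2 : ℕ)) := hf
    have hgg : g ((k - 1 - (j1 : ℕ) + 1) % k) = g ((k - 1 - (j2 : ℕ) + 1) % k) := by
      rw [← e1, ← e2, hf']
    have harg := hgne _ _ (Nat.mod_lt _ (by omega)) (Nat.mod_lt _ (by omega)) hgg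
    rw [hmod _ hm1, hmod _ hm2] at harg
    apply Fin.ext
    split_ifs at harg <;> omega
  · -- membership
    intro j
    have hj : (j : ℕ) < k - 2 + 2 := j.isLt
    exact (hy _ (by omega : k - 1 - (j : ℕ) < k)).1
  · -- covering
    intro j
    dsimp only
    have hj : (j : ℕ) < k - 2 + 2 := j.isLt
    have hv1 := Fin.val_add_one j
    by_cases hlast : j = Fin.last (k - 2 + 1)
    · rw [if_pos hlast] at hv1
      have hjval : (j : ℕ) = k - 1 := by
        rw [hlast]; simp [Fin.last]; omega
      have h1 : ((j + 1 : Fin (k - 2 + 2)) : ℕ) = 0 := hv1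
      rw [h1, hjval]
      have e1 := (hy (k - 1 - 0) (by omega)).2.1
      have e2 := (hy (k - 1 - (k - 1)) (by omega)).2.2
      rw [show k - 1 - 0 = k - 1 by omega] at e1
      rw [show k - 1 - (k - 1) = 0 by omega] at e2
      rw [show k - 1 - (k - 1) = 0 by omega, show k - 1 - 0 = k - 1 by omega]
      rw [e1, show (k - 1 + 1) % k = 0 by rw [show k - 1 + 1 = k by omega, Nat.mod_self]]
      exact e2
    · rw [if_neg hlast] at hv1
      have hjval : (j : ℕ) < k - 1 := by
        have := Fin.val_lt_last hlast
        omega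
      rw [hv1]
      have e1 := (hy (k - 1 - ((j : ℕ) + 1)) (by omega)).2.1
      have e2 := (hy (k - 1 - (j : ℕ)) (by omega)).2.2
      rw [e1, show (k - 1 - ((j : ℕ) + 1) + 1) % k = k - 1 - (j : ℕ) by
        rw [show k - 1 - ((j : ℕ) + 1) + 1 = k - 1 - (j : ℕ) by omega]
        exact Nat.mod_eq_of_lt (by omega)]
      exact e2

end Cycle

end Aux

/-- Enumerate a finite type along an arbitrary linear-order relation. -/
lemma exists_enum {β : Type} [Fintype β] (le' : β → β → Prop)
    (hrefl : ∀ a, le' a a) (htrans : ∀ a b c, le' a b → le' b c → le' a c)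
    (hanti : ∀ a b, le' a b → le' b a → a = b) (htot : ∀ a b, le' a b ∨ le' b a) :
    ∃ ι : β ≃ Fin (Fintype.card β), ∀ x y, le' x y ↔ ι x ≤ ι y := by
  classical
  letI lo : LinearOrder β :=
    { le := le'
      lt := fun a b => le' a b ∧ ¬ le' b a
      le_refl := hrefl
      le_trans := htrans
      lt_iff_le_not_ge := fun _ _ => Iff.rfl
      le_antisymm := hanti
      le_total := htot
      toDecidableLE := Classical.decRel _ }
  let e := monoEquivOfFin β (rfl : Fintype.card β = Fintype.card β)
  refine ⟨e.symm.toEquiv, fun x y => ?_⟩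
  constructor
  · intro h
    exact e.symm.le_iff_le.mpr h
  · intro h
    exact e.symm.le_iff_le.mp h


/-- `ι` is a linear extension of the finite partial order: an order-preserving
enumeration of its elements. -/
def IsLinearExtension {α : Type} [Fintype α] [PartialOrder α]
    (ι : α ≃ Fin (Fintype.card α)) : Prop :=
  ∀ x y : α, x ≤ y → ι x ≤ ι y

open Relation
open Fin.NatCast

/-- A partial matching on a finite ranked poset is acyclic (admits no alternating
cycle) if and only if there is a linear extension of the poset in which, for every
matched pair `(a, u(a))`, the element `u(a)` follows directly after `a`. -/
theorem acyclic_iff_linear_extension {α : Type} [Fintype α] [DecidableEq α]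
    [PartialOrder α] (rk : α → ℕ) (hrk : ∀ a b : α, a ⋖ b → rk b = rk a + 1)
    (M : Finset (α × α)) (hM : PosetMatching M) :
    ¬ PosetHasAltCycle M ↔
      ∃ ι : α ≃ Fin (Fintype.card α), IsLinearExtension ι ∧
        ∀ p ∈ M, (ι p.2 : ℕ) = (ι p.1 : ℕ) + 1 := by
  classical
  constructor
  · -- acyclic → linear extension
    intro hnc
    have hanti : ∀ a b : α, ReflTransGen (pcR M) a b → ReflTransGen (pcR M) b a → a = b := by
      intro a b hab hba
      by_contra hne
      rcases reflTransGen_iff_eq_or_transGen.mp hab with he | hta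
      · exact hne he.symm
      rcases reflTransGen_iff_eq_or_transGen.mp hba with he | htb
      · exact hne he
      exact hnc (pcR_cycle_alt hrk hM (hta.trans htb))
    haveI hpo : IsPartialOrder α (ReflTransGen (pcR M)) :=
      { refl := fun _ => ReflTransGen.refl
        trans := fun _ _ _ => ReflTransGen.trans
        antisymm := hanti }
    obtain ⟨s, hs, hrs⟩ := extend_partialOrder (ReflTransGen (pcR M))
    haveI : IsLinearOrder α s := hs
    have strans : ∀ a b c, s a b → s b c → s a c := fun a b c => IsTrans.trans a b c
    have santi : ∀ a b, s a b → s b a → a = b := fun a b => Std.Antisymm.antisymm a b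
    have stot : ∀ a b, s a b ∨ s b a := fun a b => Std.Total.total a b
    set le' : α → α → Prop := fun a b =>
      (pcRep M a ≠ pcRep M b ∧ s (pcRep M a) (pcRep M b)) ∨
      (pcRep M a = pcRep M b ∧ (a = b ∨ ∃ p, p ∈ M ∧ p.2 = b)) with hle'
    have le'_refl : ∀ a, le' a a := fun a => Or.inr ⟨rfl, Or.inl rfl⟩
    have le'_trans : ∀ a b c, le' a b → le' b c → le' a c := by
      intro a b c hab hbc
      rcases hab with ⟨hne1, hs1⟩ | ⟨heq1, hd1⟩
      · rcases hbc with ⟨hne2, hs2⟩ | ⟨heq2, _⟩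
        · refine Or.inl ⟨?_, strans _ _ _ hs1 hs2⟩
          intro he
          apply hne1
          exact santi _ _ hs1 (by rw [he]; exact hs2)
        · exact Or.inl ⟨by rw [← heq2]; exact hne1, by rw [← heq2]; exact hs1⟩
      · rcases hbc with ⟨hne2, hs2⟩ | ⟨heq2, hd2⟩
        · exact Or.inl ⟨by rw [heq1]; exact hne2, by rw [heq1]; exact hs2⟩
        · refine Or.inr ⟨heq1.trans heq2, ?_⟩
          rcases hd2 with he2 | htop2
          · rcases hd1 with he1 | htop1
            · exact Or.inl (he1.trans he2)
            · exact Or.inr (he2 ▸ htop1)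
          · exact Or.inr htop2
    have le'_antisymm : ∀ a b, le' a b → le' b a → a = b := by
      intro a b hab hba
      rcases hab with ⟨hne1, hs1⟩ | ⟨heq1, hd1⟩
      · rcases hba with ⟨_, hs2⟩ | ⟨heq2, _⟩
        · exact absurd (santi _ _ hs1 hs2) hne1
        · exact absurd heq2.symm hne1
      · rcases hba with ⟨hne2, _⟩ | ⟨_, hd2⟩
        · exact absurd heq1.symm hne2
        · rcases hd1 with he1 | ⟨p, hp, hp2⟩
          · exact he1
          · rcases hd2 with he2 | ⟨q, hq, hq2⟩
            · exact he2.symm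
            · -- a = q.2 top, b = p.2 top, same rep
              have hca : pcRep M a = q.1 := by rw [← hq2]; exact pcRep_top hM hq
              have hcb : pcRep M b = p.1 := by rw [← hp2]; exact pcRep_top hM hp
              have : q.1 = p.1 := by rw [← hca, ← hcb, heq1]
              have := pc_fst_inj hM hq hp this
              rw [← hq2, this, hp2]
    have le'_total : ∀ a b, le' a b ∨ le' b a := by
      intro a b
      by_cases hcc : pcRep M a = pcRep M b
      · by_cases hab : a = b
        · exact Or.inl (hab ▸ le'_refl a)
        · rcases pcRep_cases M b with hb | ⟨p, hp, hp2, _⟩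
          · rcases pcRep_cases M a with ha | ⟨q, hq, hq2, _⟩
            · exact absurd (by rw [← ha, ← hb, hcc]) hab
            · exact Or.inr (Or.inr ⟨hcc.symm, Or.inr ⟨q, hq, hq2⟩⟩)
          · exact Or.inl (Or.inr ⟨hcc, Or.inr ⟨p, hp, hp2⟩⟩)
      · rcases stot (pcRep M a) (pcRep M b) with h | h
        · exact Or.inl (Or.inl ⟨hcc, h⟩)
        · exact Or.inr (Or.inl ⟨fun he => hcc he.symm, h⟩)
    have cover_step : ∀ a b : α, a ⋖ b → le' a b := by
      intro a b hab
      by_cases hmem : (a, b) ∈ M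
      · refine Or.inr ⟨?_, Or.inr ⟨(a, b), hmem, rfl⟩⟩
        have h1 : pcRep M a = a := pcRep_fst hM hmem
        have h2 : pcRep M b = a := pcRep_top hM hmem
        rw [h1, h2]
      · have hne : pcRep M a ≠ pcRep M b := by
          intro hcc
          rcases pcRep_cases M b with hb | ⟨p, hp, hp2, hp1⟩
          · rcases pcRep_cases M a with ha | ⟨q, hq, hq2, hq1⟩
            · exact hab.ne (by rw [← ha, hcc, hb])
            · have hqb : q.1 = b := by rw [← hq1, hcc, hb]
              have hlt : b < a := by rw [← hqb, ← hq2]; exact (hM.1 q hq).lt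
              exact lt_asymm hab.lt hlt
          · rcases pcRep_cases M a with ha | ⟨q, hq, hq2, hq1⟩
            · have ha1 : a = p.1 := by rw [← ha, hcc, hp1]
              have hpe : (a, b) = p := by rw [ha1, ← hp2]
              exact hmem (hpe ▸ hp)
            · have hqp : q.1 = p.1 := by rw [← hq1, hcc, hp1]
              have := pc_fst_inj hM hq hp hqp
              exact hab.ne (by rw [← hq2, this, hp2])
        exact Or.inl ⟨hne, hrs _ _ (ReflTransGen.single ⟨hne, a, b, rfl, rfl, hab⟩)⟩
    letI : @DecidableRel α α (· < ·) := Classical.decRel _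
    letI : @DecidableRel α α (· ≤ ·) := Classical.decRel _
    letI : LocallyFiniteOrder α := Fintype.toLocallyFiniteOrder
    have chain_step : ∀ a b : α, Relation.TransGen (· ⋖ ·) a b → le' a b := by
      intro a b ht
      induction ht with
      | single h => exact cover_step _ _ h
      | @tail b' c' h1 h2 ih => exact le'_trans _ _ _ ih (cover_step _ _ h2)
    have hExt : ∀ a b : α, a ≤ b → le' a b := by
      intro a b hab
      rcases eq_or_lt_of_le hab with he | hlt
      · exact he ▸ le'_refl a
      · exact chain_step a b (transGen_covBy_of_lt hlt)
    have hPairLe : ∀ p, p ∈ M → le' p.1 p.2 := by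
      intro p hp
      exact Or.inr ⟨by rw [pcRep_fst hM hp, pcRep_top hM hp], Or.inr ⟨p, hp, rfl⟩⟩
    have hPairNotRev : ∀ p, p ∈ M → ¬ le' p.2 p.1 := by
      intro p hp hle
      rcases hle with ⟨hne, _⟩ | ⟨_, hd⟩
      · exact hne (by rw [pcRep_fst hM hp, pcRep_top hM hp])
      · rcases hd with he | htop
        · exact (hM.1 p hp).ne he.symm
        · exact not_top_fst hM hp htop
    have hBetween : ∀ p, p ∈ M → ∀ z, le' p.1 z → le' z p.2 → z = p.1 ∨ z = p.2 := by
      intro p hp z h1 h2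
      have hf : pcRep M p.1 = p.1 := pcRep_fst hM hp
      have ht : pcRep M p.2 = p.1 := pcRep_top hM hp
      by_cases hcz : pcRep M z = p.1
      · rcases pcRep_cases M z with hz | ⟨q, hq, hq2, hq1⟩
        · exact Or.inl (by rw [← hz, hcz])
        · have hqp : q.1 = p.1 := by rw [← hq1, hcz]
          have := pc_fst_inj hM hq hp hqp
          exact Or.inr (by rw [← hq2, this])
      · exfalso
        have hs1 : s (pcRep M p.1) (pcRep M z) := by
          rcases h1 with ⟨_, hss⟩ | ⟨heq, _⟩
          · exact hss
          · exact absurd (by rw [← heq, hf]) hcz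
        have hs2 : s (pcRep M z) (pcRep M p.2) := by
          rcases h2 with ⟨_, hss⟩ | ⟨heq, _⟩
          · exact hss
          · exact absurd (by rw [heq, ht]) hcz
        rw [hf] at hs1
        rw [ht] at hs2
        exact hcz (santi _ _ hs2 hs1)
    obtain ⟨ι, hι⟩ := exists_enum le' le'_refl le'_trans le'_antisymm le'_total
    refine ⟨ι, ?_, ?_⟩
    · intro x y hxy
      exact (hι x y).mp (hExt x y hxy)
    · intro p hp
      have hab : (ι p.1 : ℕ) < (ι p.2 : ℕ) := by
        have h1 : ι p.1 ≤ ι p.2 := (hι _ _).mp (hPairLe p hp)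
        have h2 : ¬ (ι p.2 ≤ ι p.1) := fun hc => hPairNotRev p hp ((hι _ _).mpr hc)
        have := lt_of_le_not_ge h1 h2
        exact this
      by_contra hne
      have hlt2 : (ι p.1 : ℕ) + 1 < (ι p.2 : ℕ) := by omega
      set m : Fin (Fintype.card α) := ⟨(ι p.1 : ℕ) + 1, lt_trans hlt2 (ι p.2).isLt⟩ with hmdef
      set z := ι.symm m with hzdef
      have hiz : ι z = m := ι.apply_symm_apply m
      have h1 : le' p.1 z := by
        apply (hι _ _).mpr
        rw [hiz]
        rw [Fin.le_def]
        simp [hmdef]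
      have h2 : le' z p.2 := by
        apply (hι _ _).mpr
        rw [hiz]
        rw [Fin.le_def]
        simp [hmdef]
        omega
      rcases hBetween p hp z h1 h2 with he | he
      · have : m = ι p.1 := by rw [← hiz, he]
        have := congrArg Fin.val this
        simp [hmdef] at this
      · have : m = ι p.2 := by rw [← hiz, he]
        have := congrArg Fin.val this
        simp [hmdef] at this
        omega
  · -- linear extension → acyclic
    rintro ⟨ι, hext, hadj⟩ ⟨n, f, hinj, hmem, hcov⟩
    have hstep : ∀ t : ℕ, (ι (f ((t : Fin (n + 2)) + 1)).1 : ℕ) < (ι (f (t : Fin (n + 2))).1 : ℕ) := by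
      intro t
      set i : Fin (n + 2) := (t : Fin (n + 2))
      have hc := hcov i
      have hlt : (f (i + 1)).1 < (f i).2 := hc.lt
      have hle : ι (f (i + 1)).1 ≤ ι (f i).2 := hext _ _ hlt.le
      have hne1 : ι (f (i + 1)).1 ≠ ι (f i).2 := fun he => hlt.ne (ι.injective he)
      have hlt2' : ι (f (i + 1)).1 < ι (f i).2 := lt_of_le_of_ne hle hne1
      have hlt2 : (ι (f (i + 1)).1 : ℕ) < (ι (f i).2 : ℕ) := hlt2' 
      have hadji := hadj (f i) (hmem i)
      have hne2 : (ι (f (i + 1)).1 : ℕ) ≠ (ι (f i).1 : ℕ) := by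
        intro he
        have : (f (i + 1)).1 = (f i).1 := ι.injective (Fin.ext he)
        by_cases hfe : f (i + 1) = f i
        · have := congrArg Fin.val (hinj hfe)
          have hiv : ((i + 1 : Fin (n + 2)) : ℕ) = ((i : Fin (n + 2)) : ℕ) := congrArg Fin.val (hinj hfe)
          rw [Fin.val_add_one] at hiv
          split_ifs at hiv with hl
          · rw [hl] at hiv
            simp [Fin.last] at hiv
          · omega
        · exact (hM.2 _ (hmem (i + 1)) _ (hmem i) hfe).1 this
      omega
    have hdesc : ∀ t : ℕ, (ι (f (t : Fin (n + 2))).1 : ℕ) + t ≤ (ι (f ((0 : ℕ) : Fin (n + 2))).1 : ℕ) := by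
      intro t
      induction t with
      | zero => omega
      | succ t ih =>
        have h1 := hstep t
        have h2 : ((t + 1 : ℕ) : Fin (n + 2)) = (t : Fin (n + 2)) + 1 := by
          push_cast
          ring
        rw [h2]
        omega
    have := hdesc ((ι (f ((0 : ℕ) : Fin (n + 2))).1 : ℕ) + 1)
    omega
end

section
/- If a partial matching on a finite ranked poset is acyclic, then there exists a linear extension in which each matched element u(a) directly follows a, and moreover this linear extension can be chosen so that its restriction to the set D ∪ C of down-matched and critical elements is non-decreasing in rank. -/
lemma myChainOfTransGen {β : Type*} {E : β → β → Prop} {a b : β}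
    (h : Relation.TransGen E a b) : ∃ l : List β, List.Chain E a (l ++ [b]) := by
  induction h with
  | single h => exact ⟨[], by simpa [List.Chain] using h⟩
  | @tail b c hab hbc ih =>
    obtain ⟨l, hl⟩ := ih
    refine ⟨l ++ [b], ?_⟩
    rw [List.append_assoc, List.singleton_append, List.Chain, List.isChain_cons_split]
    exact ⟨hl, by simpa using hbc⟩

lemma myDupSplit {β : Type*} : ∀ {l : List β}, ¬ l.Nodup →
    ∃ (x : β) (l₁ l₂ l₃ : List β), l = l₁ ++ x :: l₂ ++ x :: l₃ := by
  intro l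
  induction l with
  | nil => simp
  | cons a t ih =>
    intro h
    rw [List.nodup_cons] at h
    by_cases ha : a ∈ t
    · obtain ⟨s, u, rfl⟩ := List.append_of_mem ha
      exact ⟨a, [], s, u, by simp⟩
    · obtain ⟨x, l₁, l₂, l₃, rfl⟩ := ih (fun hn => h ⟨ha, hn⟩)
      exact ⟨x, a :: l₁, l₂, l₃, by simp⟩

lemma mySimpleCycle {β : Type*} {E : β → β → Prop} (hirr : ∀ x, ¬ E x x)
    {a : β} (h : Relation.TransGen E a a) :
    ∃ (n : ℕ) (g : Fin (n + 2) → β), Function.Injective g ∧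
      ∀ i, E (g i) (g (i + 1)) := by
  classical
  have hex : ∃ n : ℕ, ∃ l : List β, l.length = n ∧ List.Chain E a (l ++ [a]) := by
    obtain ⟨l, hl⟩ := myChainOfTransGen h
    exact ⟨l.length, l, rfl, hl⟩
  obtain ⟨l, hlen, hl⟩ := Nat.find_spec hex
  have hmin : ∀ (l' : List β), l'.length < Nat.find hex → ¬ List.Chain E a (l' ++ [a]) := by
    intro l' h1 h2
    exact Nat.find_min hex h1 ⟨l', rfl, h2⟩
  have ha : a ∉ l := by
    intro hmem
    obtain ⟨s, t, rfl⟩ := List.append_of_mem hmem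
    rw [show (s ++ a :: t) ++ [a] = s ++ a :: (t ++ [a]) by simp, List.Chain, List.isChain_cons_split] at hl
    refine hmin s ?_ hl.1
    rw [← hlen]; simp
  have hnd : l.Nodup := by
    by_contra hdup
    obtain ⟨x, l₁, l₂, l₃, rfl⟩ := myDupSplit hdup
    rw [show (l₁ ++ x :: l₂ ++ x :: l₃) ++ [a] = l₁ ++ x :: (l₂ ++ x :: (l₃ ++ [a])) by simp,
      List.Chain, List.isChain_cons_split] at hl
    obtain ⟨h1, h2⟩ := hl
    rw [List.isChain_cons_split] at h2
    have hcomb : List.Chain E a (l₁ ++ x :: (l₃ ++ [a])) :=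
      List.isChain_cons_split.mpr ⟨h1, h2.2⟩
    refine hmin (l₁ ++ x :: l₃) ?_
      (by rwa [show (l₁ ++ x :: l₃) ++ [a] = l₁ ++ x :: (l₃ ++ [a]) by simp])
    rw [← hlen]; simp
  have hlne : l ≠ [] := by
    rintro rfl
    simp only [List.nil_append, List.chain_cons, List.Chain.nil] at hl
    exact hirr a (List.isChain_pair.mp hl)
  set L : List β := a :: l with hLdef
  have hm : 1 ≤ l.length := List.length_pos_iff.mpr hlne
  have hLlen : L.length = (l.length - 1) + 2 := by simp [hLdef]; omega
  have hndL : L.Nodup := List.nodup_cons.mpr ⟨ha, hnd⟩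
  have hK : List.Chain' E (L ++ [a]) := by
    rw [show L ++ [a] = a :: (l ++ [a]) by simp [hLdef]]
    exact hl
  set G : ℕ → β := fun j => L.getD j a with hGdef
  have hchain : ∀ i : ℕ, i < L.length - 1 → E (G i) (G (i + 1)) := by
    intro i hi
    have h1 : E ((L ++ [a]).get ⟨i, by simp; omega⟩) ((L ++ [a]).get ⟨i + 1, by simp; omega⟩) :=
      List.isChain_iff_getElem.mp hK i (by simp; omega)
    have e1 : (L ++ [a]).get ⟨i, by simp; omega⟩ = G i := by
      show _ = L.getD i a
      rw [← List.getD_append L [a] a i (by omega), List.getD_eq_getElem _ _ (by simp; omega)]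
      rfl
    have e2 : (L ++ [a]).get ⟨i + 1, by simp; omega⟩ = G (i + 1) := by
      show _ = L.getD (i+1) a
      rw [← List.getD_append L [a] a (i+1) (by omega), List.getD_eq_getElem _ _ (by simp; omega)]
      rfl
    rwa [e1, e2] at h1
  have hwrap : E (G (L.length - 1)) (G 0) := by
    have h1 : E ((L ++ [a]).get ⟨L.length - 1, by simp⟩)
        ((L ++ [a]).get ⟨L.length - 1 + 1, by simp; omega⟩) :=
      List.isChain_iff_getElem.mp hK (L.length - 1)
      (by simp only [List.length_append, List.length_singleton]; omega)
    have e1 : (L ++ [a]).get ⟨L.length - 1, by simp⟩ = G (L.length - 1) := by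
      show _ = L.getD (L.length - 1) a
      rw [← List.getD_append L [a] a _ (by omega), List.getD_eq_getElem _ _ (by simp)]
      rfl
    have e2 : (L ++ [a]).get ⟨L.length - 1 + 1, by simp; omega⟩ = G 0 := by
      have : L.length - 1 + 1 = L.length := by omega
      rw [List.get_eq_getElem]
      simp only [this]
      rw [List.getElem_append_right (by omega)]
      simp [hGdef, hLdef]
    rwa [e1, e2] at h1
  have hinjG : ∀ i j : ℕ, i < L.length → j < L.length → G i = G j → i = j := by
    intro i j hi hj hij
    rw [hGdef] at hij
    simp only [List.getD_eq_getElem _ _ hi, List.getD_eq_getElem _ _ hj] at hij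
    have := List.nodup_iff_injective_get.mp hndL
      (show L.get ⟨i, hi⟩ = L.get ⟨j, hj⟩ by simpa using hij)
    simpa using congrArg Fin.val this
  refine ⟨l.length - 1, fun i => G (i : ℕ), ?_, ?_⟩
  · intro i j hij
    exact Fin.ext (hinjG _ _ (by omega) (by omega) hij)
  · intro i
    rcases eq_or_ne (i : ℕ) (l.length - 1 + 1) with he | hne
    · have hval : ((i + 1 : Fin (l.length - 1 + 2)) : ℕ) = 0 := by
        rw [Fin.val_add_one]
        split
        · rfl
        · next h' => exact absurd (Fin.ext (by simp [Fin.val_last, he])) h'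
      simp only [hval]
      rw [show (i : ℕ) = L.length - 1 by omega]
      exact hwrap
    · have hval : ((i + 1 : Fin (l.length - 1 + 2)) : ℕ) = (i : ℕ) + 1 := by
        rw [Fin.val_add_one]
        split
        · next h' => exact absurd (congrArg Fin.val h') (by simp [Fin.val_last]; omega)
        · rfl
      simp only [hval]
      exact hchain _ (by omega)

/-- If a partial matching on a finite ranked poset is acyclic, there exists a linear
extension in which each matched element `u(a)` directly follows `a`, and which can
moreover be chosen so that its restriction to the set `D ∪ C` of down-matched and
critical elements is non-decreasing in rank. -/
theorem linear_extension_of_acyclic {α : Type} [Fintype α] [DecidableEq α]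
    [PartialOrder α] (rk : α → ℕ) (hrk : ∀ a b : α, a ⋖ b → rk b = rk a + 1)
    (M : Finset (α × α)) (hM : PosetMatching M) (hacyc : ¬ PosetHasAltCycle M) :
    ∃ ι : α ≃ Fin (Fintype.card α), IsLinearExtension ι ∧
      (∀ p ∈ M, (ι p.2 : ℕ) = (ι p.1 : ℕ) + 1) ∧
      ∀ x y : α,
        ((∃ p ∈ M, p.1 = x) ∨ ∀ p ∈ M, p.1 ≠ x ∧ p.2 ≠ x) →
        ((∃ p ∈ M, p.1 = y) ∨ ∀ p ∈ M, p.1 ≠ y ∧ p.2 ≠ y) →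
        ι x ≤ ι y → rk x ≤ rk y := by
  classical
  obtain ⟨hcov, hdis⟩ := hM
  set E : α × α → α × α → Prop := fun p q => q ∈ M ∧ p.1 ⋖ q.2 ∧ p ≠ q with hEdef
  have hEirr : ∀ p, ¬ E p p := fun p hp => hp.2.2 rfl
  have hTC : ∀ p, ¬ Relation.TransGen E p p := by
    intro p hp
    obtain ⟨n, g, hginj, hgcyc⟩ := mySimpleCycle hEirr hp
    refine hacyc ⟨n, fun i => g (-i), hginj.comp neg_injective, fun i => ?_, fun i => ?_⟩
    · show g (-i) ∈ M
      have h := hgcyc (-i - 1)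
      rw [show (-i - 1 + 1 : Fin (n + 2)) = -i by abel] at h
      exact h.1
    · show (g (-(i + 1))).1 ⋖ (g (-i)).2
      have h := hgcyc (-i - 1)
      rw [show (-i - 1 + 1 : Fin (n + 2)) = -i by abel] at h
      rw [show (-(i + 1) : Fin (n + 2)) = -i - 1 by abel]
      exact h.2.1
  letI hPO : IsPartialOrder (α × α) (fun p q => p = q ∨ Relation.TransGen E p q) :=
    { refl := fun p => Or.inl rfl
      trans := by
        rintro p q r (rfl | hpq) (rfl | hqr)
        · exact Or.inl rfl
        · exact Or.inr hqr
        · exact Or.inr hpq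
        · exact Or.inr (hpq.trans hqr)
      antisymm := by
        rintro p q (rfl | hpq) h2
        · rfl
        · rcases h2 with rfl | hqp
          · rfl
          · exact absurd (hpq.trans hqp) (hTC p) }
  obtain ⟨s, hslin, hsext⟩ :=
    extend_partialOrder (fun p q => p = q ∨ Relation.TransGen E p q)
  haveI := hslin
  have hstot : ∀ p q, s p q ∨ s q p := fun p q => total_of s p q
  have hstrans : ∀ p q r, s p q → s q r → s p r := fun _ _ _ h1 h2 => _root_.trans h1 h2
  have hsanti : ∀ p q, s p q → s q p → p = q := fun _ _ h1 h2 => _root_.antisymm h1 h2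
  set key : α × α → ℕ := fun p => rk p.1 with hkeydef
  set LL : α × α → α × α → Prop :=
    fun p q => (key p < key q ∨ (key p = key q ∧ s p q)) ∧ p ≠ q with hLLdef
  have hLLtrans : ∀ p q r, LL p q → LL q r → LL p r := by
    rintro p q r ⟨h1, hne1⟩ ⟨h2, hne2⟩
    refine ⟨?_, ?_⟩
    · rcases h1 with h1 | ⟨e1, s1⟩ <;> rcases h2 with h2 | ⟨e2, s2⟩
      · exact Or.inl (by omega)
      · exact Or.inl (by omega)
      · exact Or.inl (by omega)
      · exact Or.inr ⟨by omega, hstrans _ _ _ s1 s2⟩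
    · rintro rfl
      rcases h1 with h1 | ⟨e1, s1⟩ <;> rcases h2 with h2 | ⟨e2, s2⟩
      · omega
      · omega
      · omega
      · exact hne1 (hsanti _ _ s1 s2)
  have hLLconn : ∀ p q, p ≠ q → LL p q ∨ LL q p := by
    intro p q hne
    rcases lt_trichotomy (key p) (key q) with h | h | h
    · exact Or.inl ⟨Or.inl h, hne⟩
    · rcases hstot p q with hs | hs
      · exact Or.inl ⟨Or.inr ⟨h, hs⟩, hne⟩
      · exact Or.inr ⟨Or.inr ⟨h.symm, hs⟩, hne.symm⟩
    · exact Or.inr ⟨Or.inl h, hne.symm⟩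
  set blk : α → α × α := fun x =>
    if h : ∃ p ∈ M, x = p.1 ∨ x = p.2 then h.choose else (x, x) with hblkdef
  have hblkM : ∀ p ∈ M, ∀ x : α, x = p.1 ∨ x = p.2 → blk x = p := by
    intro p hp x hx
    have hex : ∃ q ∈ M, x = q.1 ∨ x = q.2 := ⟨p, hp, hx⟩
    have hbx : blk x = hex.choose := by simp only [hblkdef]; exact dif_pos hex
    obtain ⟨hq1, hq2⟩ := hex.choose_spec
    rw [hbx]
    by_contra hne
    obtain ⟨d1, d2, d3, d4⟩ := hdis _ hq1 p hp hne
    rcases hq2 with h | h <;> rcases hx with h' | h'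
    · exact d1 (by rw [← h, h'])
    · exact d2 (by rw [← h, h'])
    · exact d3 (by rw [← h, h'])
    · exact d4 (by rw [← h, h'])
  have hblkD : ∀ x : α, ¬ (∃ p ∈ M, x = p.1 ∨ x = p.2) → blk x = (x, x) := by
    intro x hx
    simp only [hblkdef]
    exact dif_neg hx
  have hblkcases : ∀ x : α,
      (blk x ∈ M ∧ (x = (blk x).1 ∨ x = (blk x).2)) ∨ blk x = (x, x) := by
    intro x
    by_cases h : ∃ p ∈ M, x = p.1 ∨ x = p.2
    · left
      obtain ⟨p, hp, hx⟩ := h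
      rw [hblkM p hp x hx]
      exact ⟨hp, hx⟩
    · exact Or.inr (hblkD x h)
  have hne12 : ∀ p ∈ M, p.1 ≠ p.2 := fun p hp => (hcov p hp).lt.ne
  have hrkp : ∀ p ∈ M, rk p.2 = rk p.1 + 1 := fun p hp => hrk _ _ (hcov p hp)
  set pos : α → ℕ := fun x => if x = (blk x).1 then 0 else 1 with hposdef
  have hpos_le : ∀ x, pos x ≤ 1 := by
    intro x; simp only [hposdef]; split <;> omega
  have hpos1 : ∀ p ∈ M, pos p.1 = 0 := by
    intro p hp
    have hb := hblkM p hp p.1 (Or.inl rfl)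
    simp [hposdef, hb]
  have hpos2 : ∀ p ∈ M, pos p.2 = 1 := by
    intro p hp
    have hb := hblkM p hp p.2 (Or.inr rfl)
    simp [hposdef, hb, (hne12 p hp).symm]
  set T : Finset (α × α) := Finset.univ.image blk with hTdef
  have hmemT : ∀ x, blk x ∈ T := fun x => Finset.mem_image_of_mem blk (Finset.mem_univ x)
  set N : α × α → ℕ := fun p => (T.filter (fun q => LL q p)).card with hNdef
  have hNmono : ∀ p q, p ∈ T → q ∈ T → LL p q → N p < N q := by
    intro p q hpT hqT hpq
    simp only [hNdef]
    apply Finset.card_lt_card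
    rw [Finset.ssubset_def]
    constructor
    · intro r hr
      rw [Finset.mem_filter] at hr ⊢
      exact ⟨hr.1, hLLtrans _ _ _ hr.2 hpq⟩
    · intro hsub
      have hp : p ∈ T.filter (fun q' => LL q' q) := Finset.mem_filter.mpr ⟨hpT, hpq⟩
      have := hsub hp
      rw [Finset.mem_filter] at this
      exact this.2.2 rfl
  set F : α → ℕ := fun x => 2 * N (blk x) + pos x with hFdef
  -- key facts
  have hkeyx : ∀ x : α, (x = (blk x).1 ∧ key (blk x) = rk x) ∨
      (blk x ∈ M ∧ x = (blk x).2 ∧ key (blk x) + 1 = rk x) := by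
    intro x
    rcases hblkcases x with ⟨hm, hx | hx⟩ | hd
    · left
      refine ⟨hx, ?_⟩
      simp only [hkeydef]
      rw [← hx]
    · right
      refine ⟨hm, hx, ?_⟩
      have h2 := hrkp _ hm
      have h3 := congrArg rk hx
      simp only [hkeydef]
      omega
    · left
      refine ⟨by rw [hd], ?_⟩
      simp [hkeydef, hd]
  have hcovF : ∀ x y : α, x ⋖ y → F x ≤ F y := by
    intro x y hxy
    have hrkxy : rk y = rk x + 1 := hrk x y hxy
    by_cases hb : blk x = blk y
    · rcases hblkcases x with ⟨hm, hx⟩ | hd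
      · have hy : y = (blk x).1 ∨ y = (blk x).2 := by
          rcases hblkcases y with ⟨hm', hy⟩ | hd'
          · rw [← hb] at hy; exact hy
          · rw [hb, hd'] at hm
            exact absurd (hcov _ hm).lt (lt_irrefl y)
        have hp12 : (blk x).1 < (blk x).2 := (hcov _ hm).lt
        rcases hx with hx | hx <;> rcases hy with hy | hy
        · exact absurd hxy.lt (by rw [hx.trans hy.symm]; exact lt_irrefl y)
        · have e1 : pos x = 0 := by rw [hx]; exact hpos1 _ hm
          have e2 : pos y = 1 := by
            rw [hy, hb]
            rw [← hb]
            exact hpos2 _ hm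
          simp only [hFdef, hb, e1, e2]
          omega
        · have hyx : (blk x).2 < (blk x).1 := by rw [← hx, ← hy]; exact hxy.lt
          exact absurd hyx (lt_asymm hp12)
        · exact absurd hxy.lt (by rw [hx.trans hy.symm]; exact lt_irrefl y)
      · rcases hblkcases y with ⟨hm', hy⟩ | hd'
        · rw [← hb, hd] at hm'
          exact absurd (hcov _ hm').lt (lt_irrefl x)
        · have hxx : (x, x) = ((y, y) : α × α) := by rw [← hd, ← hd', hb]
          have : x = y := congrArg Prod.fst hxx
          exact absurd hxy.lt (by rw [this]; exact lt_irrefl y)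
    · have hLL : LL (blk x) (blk y) := by
        refine ⟨?_, hb⟩
        rcases hkeyx x with ⟨hx1, hkx⟩ | ⟨hxm, hx2, hkx⟩ <;>
          rcases hkeyx y with ⟨hy1, hky⟩ | ⟨hym, hy2, hky⟩
        · exact Or.inl (by omega)
        · refine Or.inr ⟨by omega, ?_⟩
          refine hsext _ _ (Or.inr (Relation.TransGen.single ?_))
          simp only [hEdef]
          refine ⟨hym, ?_, hb⟩
          rw [← hx1, ← hy2]
          exact hxy
        · exact Or.inl (by omega)
        · exact Or.inl (by omega)
      have hN := hNmono _ _ (hmemT x) (hmemT y) hLL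
      have h1 := hpos_le x
      have h2 := hpos_le y
      simp only [hFdef]
      omega
  letI : @DecidableRel α α (· < ·) := Classical.decRel _
  letI : @DecidableRel α α (· ≤ ·) := Classical.decRel _
  letI : LocallyFiniteOrder α := Fintype.toLocallyFiniteOrder
  have hFle : ∀ x y : α, x ≤ y → F x ≤ F y := by
    intro x y h
    have h' := le_iff_reflTransGen_covBy.mp h
    clear h
    induction h' with
    | refl => exact le_rfl
    | tail hab hbc ih => exact ih.trans (hcovF _ _ hbc)
  have hFinj : Function.Injective F := by
    intro x y hxy
    have px := hpos_le x
    have py := hpos_le y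
    simp only [hFdef] at hxy
    have hN : N (blk x) = N (blk y) ∧ pos x = pos y := by omega
    obtain ⟨hN, hpp⟩ := hN
    have hbb : blk x = blk y := by
      by_contra hne
      rcases hLLconn _ _ hne with h | h
      · exact absurd (hNmono _ _ (hmemT x) (hmemT y) h) (by omega)
      · exact absurd (hNmono _ _ (hmemT y) (hmemT x) h) (by omega)
    rcases hblkcases x with ⟨hm, hx⟩ | hd
    · rcases hblkcases y with ⟨hm', hy⟩ | hd'
      · rcases hx with hx | hx <;> rcases hy with hy | hy
        · rw [hx, hbb, ← hy]
        · have e1 : pos x = 0 := by rw [hx]; exact hpos1 _ hm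
          have e2 : pos y = 1 := by rw [hy]; exact hpos2 _ hm'
          omega
        · have e1 : pos x = 1 := by rw [hx]; exact hpos2 _ hm
          have e2 : pos y = 0 := by rw [hy]; exact hpos1 _ hm'
          omega
        · rw [hx, hbb, ← hy]
      · rw [hbb, hd'] at hm
        exact absurd (hcov _ hm).lt (lt_irrefl y)
    · rcases hblkcases y with ⟨hm', hy⟩ | hd'
      · rw [← hbb, hd] at hm'
        exact absurd (hcov _ hm').lt (lt_irrefl x)
      · have hxx : (x, x) = ((y, y) : α × α) := by rw [← hd, ← hd', hbb]
        exact congrArg Prod.fst hxx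
  set TF : Finset ℕ := Finset.univ.image F with hTFdef
  have hTFcard : TF.card = Fintype.card α := by
    rw [hTFdef, Finset.card_image_of_injective _ hFinj, Finset.card_univ]
  have hmemTF : ∀ x, F x ∈ TF := fun x => Finset.mem_image_of_mem F (Finset.mem_univ x)
  have he0 : Function.Bijective (fun x => (⟨F x, hmemTF x⟩ : {n // n ∈ TF})) := by
    rw [Fintype.bijective_iff_injective_and_card]
    constructor
    · intro x y h
      exact hFinj (congrArg Subtype.val h)
    · rw [Fintype.card_coe, hTFcard]
  let e1 : α ≃ {n // n ∈ TF} := Equiv.ofBijective _ he0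
  let iso := TF.orderIsoOfFin hTFcard
  let ιf : α ≃ Fin (Fintype.card α) := e1.trans iso.symm.toEquiv
  have hι : ∀ x y : α, ιf x ≤ ιf y ↔ F x ≤ F y := by
    intro x y
    rw [show ιf x = iso.symm ⟨F x, hmemTF x⟩ from rfl,
      show ιf y = iso.symm ⟨F y, hmemTF y⟩ from rfl, OrderIso.le_iff_le]
    exact Subtype.mk_le_mk
  have hιlt : ∀ x y : α, ιf x < ιf y ↔ F x < F y := by
    intro x y
    have h := hι y x
    constructor
    · intro hlt
      by_contra hc
      push_neg at hc
      exact absurd (h.mpr hc) (not_le.mpr hlt)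
    · intro hlt
      by_contra hc
      push_neg at hc
      exact absurd (h.mp hc) (not_le.mpr hlt)
  refine ⟨ιf, ?_, ?_, ?_⟩
  · intro x y h
    exact (hι x y).mpr (hFle x y h)
  · intro p hp
    have hb1 : blk p.1 = p := hblkM p hp p.1 (Or.inl rfl)
    have hb2 : blk p.2 = p := hblkM p hp p.2 (Or.inr rfl)
    have hF12 : F p.2 = F p.1 + 1 := by
      simp only [hFdef, hb1, hb2, hpos1 p hp, hpos2 p hp]
    have hlt : ιf p.1 < ιf p.2 := (hιlt _ _).mpr (by omega)
    have hv : (ιf p.1 : ℕ) < (ιf p.2 : ℕ) := Fin.lt_def.mp hlt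
    by_contra hne
    have hcard := (ιf p.2).isLt
    have hlt2 : (ιf p.1 : ℕ) + 1 < (ιf p.2 : ℕ) := by omega
    have hcard2 : (ιf p.1 : ℕ) + 1 < Fintype.card α := by omega
    set c : Fin (Fintype.card α) := ⟨(ιf p.1 : ℕ) + 1, hcard2⟩ with hc
    have h1 : ιf p.1 < c := Fin.lt_def.mpr (by rw [hc]; exact Nat.lt_succ_self _)
    have h2 : c < ιf p.2 := Fin.lt_def.mpr (by rw [hc]; exact hlt2)
    have hz : ιf (ιf.symm c) = c := ιf.apply_symm_apply c
    have g1 : F p.1 < F (ιf.symm c) := (hιlt _ _).mp (by rw [hz]; exact h1)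
    have g2 : F (ιf.symm c) < F p.2 := (hιlt _ _).mp (by rw [hz]; exact h2)
    omega
  · intro x y hx hy hxy
    have hkey0 : ∀ z : α,
        ((∃ p ∈ M, p.1 = z) ∨ ∀ p ∈ M, p.1 ≠ z ∧ p.2 ≠ z) → key (blk z) = rk z := by
      intro z hz
      rcases hz with ⟨p, hp, hpz⟩ | hz
      · rw [hblkM p hp z (Or.inl hpz.symm)]
        simp only [hkeydef]
        rw [hpz]
      · have hnone : ¬∃ p ∈ M, z = p.1 ∨ z = p.2 := by
          rintro ⟨p, hp, h | h⟩
          · exact (hz p hp).1 h.symm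
          · exact (hz p hp).2 h.symm
        rw [hblkD z hnone]
    have hFxy : F x ≤ F y := (hι x y).mp hxy
    by_contra hrklt
    push_neg at hrklt
    have hkx := hkey0 x hx
    have hky := hkey0 y hy
    have hbne : blk y ≠ blk x := by
      intro h
      rw [h] at hky
      omega
    have hLL : LL (blk y) (blk x) := ⟨Or.inl (by omega), hbne⟩
    have hN := hNmono _ _ (hmemT y) (hmemT x) hLL
    have h1 := hpos_le x
    have h2 := hpos_le y
    simp only [hFdef] at hFxy
    omega
end

section
/- After the basis change a'_k := ∂b_k, x' := x − w(x ≻ a_k)·b_k (for x ∉ {a_k, b_k}, with w(b_k ≻ a_k) = 1), the new weights satisfy: (1) w(x' ≻ b'_k) = 0 and w(b'_k ≻ x') = 0 for x ≠ a_k; (2) w(a'_k ≻ x') = 0 and w(x' ≻ a'_k) = 0 for x ≠ b_k; (3) w(x' ≻ y') = w(x ≻ y) − w(x ≻ a_k)·w(b_k ≻ y) for x ≠ b_k, y ≠ a_k of consecutive dimensions. -/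
open Finset

universe u

/-- A free chain complex with a chosen basis: basis elements `B` graded by `dim`,
finitely many in each degree, with differential determined by the weights
`w b a` (the coefficient of `a` in `∂ b`), supported in consecutive degrees
and squaring to zero. -/
structure BasedComplex (R : Type u) [CommRing R] : Type (u + 1) where
  B : Type u
  [deceq : DecidableEq B]
  dim : B → ℤ
  [fin : ∀ n : ℤ, Fintype {b : B // dim b = n}]
  w : B → B → R
  w_dim : ∀ b a, w b a ≠ 0 → dim a = dim b - 1
  dsq : ∀ b z : B, (∑ y : {y : B // dim y = dim b - 1}, w b (y : B) * w (y : B) z) = 0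

attribute [instance] BasedComplex.deceq BasedComplex.fin

variable {R : Type u} [CommRing R]

/-- The chain complex is bounded on the right (degrees bounded below). -/
def BasedComplex.BoundedBelow (C : BasedComplex R) : Prop :=
  ∃ N : ℤ, ∀ b : C.B, N ≤ C.dim b

/-- A partial matching on the basis: a set of pairs `(a, b)` with `b` of one higher
degree, invertible weight `w b a`, and all members of all pairs pairwise distinct. -/
def IsMatching (C : BasedComplex R) (M : Set (C.B × C.B)) : Prop :=
  (∀ p ∈ M, C.dim p.2 = C.dim p.1 + 1 ∧ IsUnit (C.w p.2 p.1)) ∧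
  (∀ p ∈ M, ∀ q ∈ M, p ≠ q → p.1 ≠ q.1 ∧ p.1 ≠ q.2 ∧ p.2 ≠ q.1 ∧ p.2 ≠ q.2)

/-- A basis element is critical if it appears in no matched pair. -/
def IsCritical (C : BasedComplex R) (M : Set (C.B × C.B)) (x : C.B) : Prop :=
  ∀ p ∈ M, p.1 ≠ x ∧ p.2 ≠ x

/-- Existence of an alternating cycle `d(b₁) ≺ b₁ ≻ d(b₂) ≺ ⋯ ≺ bₙ ≻ d(b₁)`,
`n ≥ 2`, with distinct matched pairs `(d(bᵢ), bᵢ) ∈ M`, with respect to a weight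
function `w` (nonzero weight plays the role of the covering relation). -/
def HasAltCycleW {B : Type u} (w : B → B → R) (M : Set (B × B)) : Prop :=
  ∃ n : ℕ, ∃ f : Fin (n + 2) → B × B, Function.Injective f ∧
    (∀ i, f i ∈ M) ∧ ∀ i, w (f i).2 (f (i + 1)).1 ≠ 0

/-- An acyclic matching: a partial matching admitting no alternating cycle. -/
def IsAcyclicMatching (C : BasedComplex R) (M : Set (C.B × C.B)) : Prop :=
  IsMatching C M ∧ ¬ HasAltCycleW C.w M

/-- The weight of an alternating path `s ≻ a₁ ≺ b₁ ≻ a₂ ≺ b₂ ≻ ⋯ ≺ bₙ ≻ t`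
(encoded by its list of intermediate matched pairs `(aᵢ, bᵢ)`), namely
`(-1)ⁿ ∏ w(down-edges) / ∏ w(matching edges)`. -/
noncomputable def pathWeightW {B : Type u} (w : B → B → R) : B → List (B × B) → B → R
  | s, [], t => w s t
  | s, p :: L, t => -(w s p.1) * Ring.inverse (w p.2 p.1) * pathWeightW w p.2 L t

open Classical in
/-- The Morse-differential coefficient from `s` to `t`: the sum of the weights of all
alternating paths from `s` to `t` whose intermediate pairs are distinct members of `M`
(paths through pairs of the wrong degrees have weight `0`). -/
noncomputable def morseCoeffW (C : BasedComplex R) (w' : C.B → C.B → R)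
    (M : Set (C.B × C.B)) (s t : C.B) : R :=
  ∑ k ∈ Finset.range
      (Fintype.card ({a : C.B // C.dim a = C.dim s - 1} × {b : C.B // C.dim b = C.dim s}) + 1),
    ∑ f : Fin k → {a : C.B // C.dim a = C.dim s - 1} × {b : C.B // C.dim b = C.dim s},
      if Function.Injective f ∧ ∀ i, (((f i).1 : C.B), ((f i).2 : C.B)) ∈ M then
        pathWeightW w' s (List.ofFn fun i => (((f i).1 : C.B), ((f i).2 : C.B))) t
      else 0

/-- The Morse-differential coefficient `∑_p w(p)` with the weights of `C` itself. -/
noncomputable def morseCoeff (C : BasedComplex R) (M : Set (C.B × C.B)) (s t : C.B) : R :=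
  morseCoeffW C C.w M s t
/-- The boundary operator on chains (finitely supported combinations of basis elements). -/
noncomputable def BasedComplex.bd (C : BasedComplex R) : (C.B →₀ R) →ₗ[R] (C.B →₀ R) :=
  Finsupp.lsum R fun b => LinearMap.toSpanSingleton R _
    (∑ a : {a : C.B // C.dim a = C.dim b - 1}, Finsupp.single (a : C.B) (C.w b (a : C.B)))

/-- The submodule of chains of degree `n`. -/
def BasedComplex.deg (C : BasedComplex R) (n : ℤ) : Submodule R (C.B →₀ R) :=
  Finsupp.supported R R {b | C.dim b = n}

private lemma bd_single_aux (C : BasedComplex R) (x : C.B) (r : R) (n : ℤ)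
    (h : C.dim x - 1 = n) :
    C.bd (Finsupp.single x r) =
      ∑ y : {y : C.B // C.dim y = n}, Finsupp.single (y : C.B) (r * C.w x (y : C.B)) := by
  subst h
  rw [BasedComplex.bd, Finsupp.lsum_single, LinearMap.toSpanSingleton_apply, Finset.smul_sum]
  simp [Finsupp.smul_single]

/-- After the basis change `a' = ∂b`, `b' = b`, `x' = x − w(x ≻ a) • b`, the new
weights (coefficients of the differential in the new basis `v`) satisfy:
(1) `w(x' ≻ b') = 0` and `w(b' ≻ x') = 0` for `x ≠ a`;
(2) `w(a' ≻ x') = 0` and `w(x' ≻ a') = 0` for `x ≠ b`;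
(3) `w(x' ≻ y') = w(x ≻ y) − w(x ≻ a)·w(b ≻ y)` for `x ≠ b`, `y ≠ a` in the
consecutive dimensions of `b` and `a`. -/
theorem basis_change_weights (C : BasedComplex R) (a b : C.B)
    (hdim : C.dim b = C.dim a + 1) (hw : C.w b a = 1)
    (v : Module.Basis C.B R (C.B →₀ R))
    (hva : v a = C.bd (Finsupp.single b 1))
    (hvb : v b = Finsupp.single b 1)
    (hvx : ∀ x : C.B, x ≠ a → x ≠ b →
      v x = Finsupp.single x 1 - C.w x a • Finsupp.single b 1) :
    (∀ x : C.B, x ≠ a → C.dim x = C.dim b + 1 → v.repr (C.bd (v x)) b = 0) ∧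
    (∀ x : C.B, x ≠ a → C.dim x = C.dim b - 1 → v.repr (C.bd (v b)) x = 0) ∧
    (∀ x : C.B, x ≠ b → C.dim x = C.dim a - 1 → v.repr (C.bd (v a)) x = 0) ∧
    (∀ x : C.B, x ≠ b → C.dim x = C.dim a + 1 → v.repr (C.bd (v x)) a = 0) ∧
    (∀ x y : C.B, x ≠ b → y ≠ a → C.dim x = C.dim b → C.dim y = C.dim a →
      v.repr (C.bd (v x)) y = C.w x y - C.w x a * C.w b y) := by
  classical
  have hdima : C.dim a = C.dim b - 1 := by omega
  have hw0 : ∀ x y : C.B, C.dim y ≠ C.dim x - 1 → C.w x y = 0 := by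
    intro x y h
    by_contra h'
    exact h (C.w_dim x y h')
  have rb' : v.repr (Finsupp.single b (1 : R)) = Finsupp.single b 1 := by
    have h := v.repr_self b
    rw [hvb] at h
    exact h
  have rx' : ∀ x : C.B, x ≠ a → x ≠ b →
      v.repr (Finsupp.single x (1 : R)) =
        Finsupp.single x 1 + C.w x a • Finsupp.single b 1 := by
    intro x hxa hxb
    have hx : Finsupp.single x (1 : R) = v x + C.w x a • Finsupp.single b (1 : R) := by
      rw [hvx x hxa hxb, sub_add_cancel]
    conv_lhs => rw [hx]
    rw [map_add, map_smul, v.repr_self, rb']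
  have hva' : v a = ∑ y : {y : C.B // C.dim y = C.dim a},
      Finsupp.single (y : C.B) (C.w b (y : C.B)) := by
    rw [hva, bd_single_aux C b 1 (C.dim a) (by omega)]
    simp
  have hsy : ∀ y : C.B, C.dim y = C.dim a → y ≠ a →
      v.repr (Finsupp.single y (1 : R)) = Finsupp.single y 1 := by
    intro y hy hya
    have hyb : y ≠ b := by intro h; rw [h] at hy; omega
    rw [rx' y hya hyb, hw0 y a (by omega), zero_smul, add_zero]
  have hsa : Finsupp.single a (1 : R) =
      v a - ∑ y ∈ Finset.univ.erase (⟨a, rfl⟩ : {y : C.B // C.dim y = C.dim a}),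
        Finsupp.single (y : C.B) (C.w b (y : C.B)) := by
    rw [hva', ← Finset.add_sum_erase _ _
      (Finset.mem_univ (⟨a, rfl⟩ : {y : C.B // C.dim y = C.dim a}))]
    simp [hw]
  have key : ∀ y c : C.B, C.dim y = C.dim a → C.dim c = C.dim a →
      v.repr (Finsupp.single y (1 : R)) c =
        (if c = y then 1 else 0) - (if y = a ∧ c ≠ a then C.w b c else 0) := by
    intro y c hy hc
    by_cases hya : y = a
    · rw [hya]
      have hsum : ∀ z ∈ Finset.univ.erase (⟨a, rfl⟩ : {u : C.B // C.dim u = C.dim a}),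
          v.repr (Finsupp.single (z : C.B) (C.w b (z : C.B))) =
            C.w b (z : C.B) • Finsupp.single (z : C.B) (1 : R) := by
        intro z hz
        have hza : (z : C.B) ≠ a := fun h => (Finset.mem_erase.mp hz).1 (Subtype.ext h)
        have hz1 : Finsupp.single (z : C.B) (C.w b (z : C.B)) =
            C.w b (z : C.B) • Finsupp.single (z : C.B) (1 : R) := by
          rw [Finsupp.smul_single', mul_one]
        rw [hz1, map_smul, hsy (z : C.B) z.2 hza]
      have h0 : v.repr (Finsupp.single a (1 : R)) =
          Finsupp.single a 1 -
            ∑ z ∈ Finset.univ.erase (⟨a, rfl⟩ : {u : C.B // C.dim u = C.dim a}),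
              C.w b (z : C.B) • Finsupp.single (z : C.B) (1 : R) := by
        conv_lhs => rw [hsa]
        rw [map_sub, map_sum, Finset.sum_congr rfl hsum, v.repr_self]
      have h1 : v.repr (Finsupp.single a (1 : R)) c =
          Finsupp.single a (1 : R) c -
            ∑ z ∈ Finset.univ.erase (⟨a, rfl⟩ : {u : C.B // C.dim u = C.dim a}),
              C.w b (z : C.B) * Finsupp.single (z : C.B) (1 : R) c := by
        rw [h0, Finsupp.sub_apply, Finsupp.finset_sum_apply]
        simp only [Finsupp.smul_apply, smul_eq_mul]
      rw [h1]
      by_cases hca : c = a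
      · have hz0 : ∑ z ∈ Finset.univ.erase (⟨a, rfl⟩ : {u : C.B // C.dim u = C.dim a}),
            C.w b (z : C.B) * Finsupp.single (z : C.B) (1 : R) c = 0 := by
          refine Finset.sum_eq_zero fun z hz => ?_
          have hza : (z : C.B) ≠ c := fun h =>
            (Finset.mem_erase.mp hz).1 (Subtype.ext (h.trans hca))
          rw [Finsupp.single_apply, if_neg hza, mul_zero]
        rw [hz0]
        simp [Finsupp.single_apply, hca]
      · rw [Finset.sum_eq_single_of_mem (⟨c, hc⟩ : {u : C.B // C.dim u = C.dim a})
            (Finset.mem_erase.mpr ⟨fun h => hca (congrArg Subtype.val h), Finset.mem_univ _⟩)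
            (fun z _ hz => by
              have hzc : (z : C.B) ≠ c := fun h => hz (Subtype.ext h)
              rw [Finsupp.single_apply, if_neg hzc, mul_zero])]
        have hac : a ≠ c := fun h => hca h.symm
        simp [Finsupp.single_apply, hca, hac]
    · rw [hsy y hy hya, Finsupp.single_apply]
      simp only [hya, false_and, if_false, sub_zero]
      by_cases h : y = c
      · subst h
        simp
      · rw [if_neg h, if_neg fun hh => h hh.symm]
  have keyb : ∀ y : C.B, C.dim y = C.dim b →
      v.repr (Finsupp.single y (1 : R)) b = C.w y a := by
    intro y hy
    by_cases hyb : y = b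
    · subst hyb
      rw [rb', hw, Finsupp.single_apply, if_pos rfl]
    · have hya : y ≠ a := by intro h; rw [h] at hy; omega
      rw [rx' y hya hyb, Finsupp.add_apply, Finsupp.smul_apply,
        Finsupp.single_apply, if_neg hyb, Finsupp.single_apply, if_pos rfl,
        smul_eq_mul, mul_one, zero_add]
  have main : ∀ x c : C.B, x ≠ b → C.dim x = C.dim b → C.dim c = C.dim a →
      v.repr (C.bd (v x)) c =
        (∑ y : {y : C.B // C.dim y = C.dim a}, C.w x (y : C.B) *
          ((if c = (y : C.B) then 1 else 0) -
            (if (y : C.B) = a ∧ c ≠ a then C.w b c else 0)))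
          - C.w x a * (if a = c then 1 else 0) := by
    intro x c hxb hdx hdc
    have hxa : x ≠ a := by intro h; rw [h] at hdx; omega
    rw [hvx x hxa hxb, map_sub, map_smul, ← hva, map_sub, map_smul, v.repr_self,
      bd_single_aux C x 1 (C.dim a) (by omega), map_sum]
    rw [Finsupp.sub_apply, Finsupp.smul_apply, Finsupp.finset_sum_apply,
      Finsupp.single_apply, smul_eq_mul]
    congr 1
    refine Finset.sum_congr rfl fun y _ => ?_
    have hy1 : Finsupp.single (y : C.B) (1 * C.w x (y : C.B)) =
        C.w x (y : C.B) • Finsupp.single (y : C.B) (1 : R) := by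
      rw [one_mul, Finsupp.smul_single', mul_one]
    rw [hy1, map_smul, Finsupp.smul_apply, smul_eq_mul, key (y : C.B) c y.2 hdc]
  refine ⟨?_, ?_, ?_, ?_, ?_⟩
  · -- (1) w(x' ≻ b') = 0
    intro x hxa hdx
    have hxb : x ≠ b := by intro h; rw [h] at hdx; omega
    have hwxa : C.w x a = 0 := hw0 x a (by omega)
    have hvx' : v x = Finsupp.single x 1 := by
      rw [hvx x hxa hxb, hwxa, zero_smul, sub_zero]
    rw [hvx', bd_single_aux C x 1 (C.dim b) (by omega), map_sum, Finsupp.finset_sum_apply]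
    have hterm : ∀ y : {y : C.B // C.dim y = C.dim b},
        v.repr (Finsupp.single (y : C.B) (1 * C.w x (y : C.B))) b =
          C.w x (y : C.B) * C.w (y : C.B) a := by
      intro y
      have hy1 : Finsupp.single (y : C.B) (1 * C.w x (y : C.B)) =
          C.w x (y : C.B) • Finsupp.single (y : C.B) (1 : R) := by
        rw [one_mul, Finsupp.smul_single', mul_one]
      rw [hy1, map_smul, Finsupp.smul_apply, smul_eq_mul, keyb (y : C.B) y.2]
    rw [Finset.sum_congr rfl fun y _ => hterm y]
    have hd := C.dsq x a
    rw [show C.dim x - 1 = C.dim b by omega] at hd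
    exact hd
  · -- (2) w(b' ≻ x') = 0
    intro x hxa _
    rw [hvb, ← hva, v.repr_self, Finsupp.single_apply, if_neg (Ne.symm hxa)]
  · -- (3) w(a' ≻ x') = 0
    intro x _ _
    have h0 : C.bd (v a) = 0 := by
      rw [hva', map_sum]
      have hterm : ∀ y : {y : C.B // C.dim y = C.dim a},
          C.bd (Finsupp.single (y : C.B) (C.w b (y : C.B))) =
            ∑ z : {z : C.B // C.dim z = C.dim a - 1},
              Finsupp.single (z : C.B) (C.w b (y : C.B) * C.w (y : C.B) (z : C.B)) := by
        intro y
        exact bd_single_aux C (y : C.B) (C.w b (y : C.B)) (C.dim a - 1)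
          (by have := y.2; omega)
      rw [Finset.sum_congr rfl fun y _ => hterm y, Finset.sum_comm]
      refine Finset.sum_eq_zero fun z _ => ?_
      rw [← Finsupp.single_finset_sum]
      have hd := C.dsq b (z : C.B)
      rw [← hdima] at hd
      rw [hd, Finsupp.single_zero]
    rw [h0, map_zero, Finsupp.coe_zero, Pi.zero_apply]
  · -- (4) w(x' ≻ a') = 0
    intro x hxb hdx
    rw [main x a hxb (by omega) rfl]
    have hterm : ∀ y : {y : C.B // C.dim y = C.dim a},
        C.w x (y : C.B) * ((if a = (y : C.B) then (1 : R) else 0) -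
          (if (y : C.B) = a ∧ a ≠ a then C.w b a else 0)) =
          if y = (⟨a, rfl⟩ : {y : C.B // C.dim y = C.dim a}) then C.w x a else 0 := by
      intro y
      by_cases h : (y : C.B) = a
      · have hy : y = (⟨a, rfl⟩ : {y : C.B // C.dim y = C.dim a}) := Subtype.ext h
        simp [h, hy]
      · simp [h, Ne.symm h, Subtype.ext_iff]
    rw [Finset.sum_congr rfl fun y _ => hterm y, Finset.sum_ite_eq' Finset.univ,
      if_pos (Finset.mem_univ _), if_pos rfl]
    ring
  · -- (5) w(x' ≻ y') = w(x ≻ y) − w(x ≻ a)·w(b ≻ y)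
    intro x y hxb hya hdx hdy
    rw [main x y hxb hdx hdy]
    have hterm : ∀ z : {z : C.B // C.dim z = C.dim a},
        C.w x (z : C.B) * ((if y = (z : C.B) then (1 : R) else 0) -
          (if (z : C.B) = a ∧ y ≠ a then C.w b y else 0)) =
          (if z = (⟨y, hdy⟩ : {z : C.B // C.dim z = C.dim a}) then C.w x y else 0) -
          (if z = (⟨a, rfl⟩ : {z : C.B // C.dim z = C.dim a}) then C.w x a * C.w b y
            else 0) := by
      intro z
      by_cases h1 : (z : C.B) = y
      · have hz : z = (⟨y, hdy⟩ : {z : C.B // C.dim z = C.dim a}) := Subtype.ext h1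
        have h2 : (z : C.B) ≠ a := by rw [h1]; exact hya
        simp [h1, hz, h2, Subtype.ext_iff, hya, Ne.symm hya]
      · by_cases h2 : (z : C.B) = a
        · have hz : z = (⟨a, rfl⟩ : {z : C.B // C.dim z = C.dim a}) := Subtype.ext h2
          have hay : a ≠ y := fun h => hya h.symm
          simp [h1, h2, hz, Subtype.ext_iff, hya, Ne.symm h1, hay]
        · simp [Ne.symm h1, h1, h2, Subtype.ext_iff]
    rw [Finset.sum_congr rfl fun z _ => hterm z, Finset.sum_sub_distrib,
      Finset.sum_ite_eq' Finset.univ, Finset.sum_ite_eq' Finset.univ,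
      if_pos (Finset.mem_univ _), if_pos (Finset.mem_univ _),
      if_neg (fun h => hya h.symm)]
    ring
end

section
/- With the basis change a'_k := ∂b_k, x' := x − w(x ≻ a_k)·b_k, the pair (a'_k, b'_k) spans a subcomplex of C_* isomorphic to Atom(dim b_k), and C_* splits as the direct sum of this subcomplex and the subcomplex generated by the remaining new basis elements. -/
open Finset

universe u

variable {R : Type u} [CommRing R]

lemma bd_single (C : BasedComplex R) (x : C.B) :
    C.bd (Finsupp.single x 1) =
      ∑ y : {y : C.B // C.dim y = C.dim x - 1}, Finsupp.single (y : C.B) (C.w x (y : C.B)) := by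
  simp [BasedComplex.bd, Finsupp.lsum_single, LinearMap.toSpanSingleton_apply]

lemma bd_single_apply (C : BasedComplex R) (x y : C.B) :
    (C.bd (Finsupp.single x 1)) y = C.w x y := by
  rw [bd_single, Finsupp.finset_sum_apply]
  by_cases h : C.dim y = C.dim x - 1
  · rw [Fintype.sum_eq_single (⟨y, h⟩ : {y : C.B // C.dim y = C.dim x - 1})]
    · simp
    · intro z hz
      rw [Finsupp.single_apply, if_neg]
      exact fun hzy => hz (Subtype.ext hzy)
  · rw [Finset.sum_eq_zero, eq_comm]
    · by_contra hne
      exact h (C.w_dim x y hne)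
    · intro z _
      rw [Finsupp.single_apply, if_neg]
      intro hzy
      exact h (hzy ▸ z.2)

lemma bd_bd (C : BasedComplex R) (x : C.B) :
    C.bd (C.bd (Finsupp.single x 1)) = 0 := by
  rw [bd_single, map_sum]
  ext z
  rw [Finsupp.finset_sum_apply, Finsupp.coe_zero, Pi.zero_apply, ← C.dsq x z]
  refine Finset.sum_congr rfl fun y _ => ?_
  have : (Finsupp.single (y : C.B) (C.w x (y : C.B))) = C.w x (y : C.B) • Finsupp.single (y : C.B) (1 : R) := by
    rw [Finsupp.smul_single, smul_eq_mul, mul_one]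
  rw [this, map_smul, Finsupp.smul_apply, bd_single_apply, smul_eq_mul]
/-- With the basis change `a' = ∂b`, `b' = b`, `x' = x − w(x ≻ a) • b`, the pair
`(a', b')` spans a subcomplex of `C_*` isomorphic to `Atom(dim b)` (that is,
`∂b' = a'` and `∂a' = 0`), and `C_*` splits as the direct sum of this subcomplex and
the subcomplex spanned by the remaining new basis elements. -/
theorem basis_change_atom_split (C : BasedComplex R) (a b : C.B)
    (hdim : C.dim b = C.dim a + 1) (hw : C.w b a = 1)
    (v : Module.Basis C.B R (C.B →₀ R))
    (hva : v a = C.bd (Finsupp.single b 1))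
    (hvb : v b = Finsupp.single b 1)
    (hvx : ∀ x : C.B, x ≠ a → x ≠ b →
      v x = Finsupp.single x 1 - C.w x a • Finsupp.single b 1) :
    C.bd (v b) = v a ∧
    C.bd (v a) = 0 ∧
    Submodule.map C.bd (Submodule.span R {v a, v b}) ≤ Submodule.span R {v a, v b} ∧
    Submodule.map C.bd
        (Submodule.span R (Set.range fun x : {x : C.B // x ≠ a ∧ x ≠ b} => v (x : C.B))) ≤
      Submodule.span R (Set.range fun x : {x : C.B // x ≠ a ∧ x ≠ b} => v (x : C.B)) ∧
    IsCompl (Submodule.span R {v a, v b})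
      (Submodule.span R (Set.range fun x : {x : C.B // x ≠ a ∧ x ≠ b} => v (x : C.B))) := by
  have hab : a ≠ b := by
    intro h; rw [h] at hdim; omega
  -- w b z = 0 for z of dimension dim b
  have hwbz : ∀ z : C.B, C.dim z = C.dim b → C.w b z = 0 := by
    intro z hz
    by_contra hne
    have := C.w_dim b z hne
    omega
  -- w x a = 0 unless dim x = dim b
  have hwxa : ∀ x : C.B, C.dim x ≠ C.dim b → C.w x a = 0 := by
    intro x hx
    by_contra hne
    have := C.w_dim x a hne
    omega
  -- coordinate functionals
  set φa : (C.B →₀ R) →ₗ[R] R := Finsupp.lapply a with hφa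
  set φb : (C.B →₀ R) →ₗ[R] R :=
    ∑ z : {z : C.B // C.dim z = C.dim b}, C.w (z : C.B) a • Finsupp.lapply (z : C.B) with hφb
  have φb_apply : ∀ c : C.B →₀ R,
      φb c = ∑ z : {z : C.B // C.dim z = C.dim b}, C.w (z : C.B) a * c (z : C.B) := by
    intro c
    simp [hφb, Finsupp.lapply_apply]
  -- values on the new basis
  have φa_basis : ∀ y : C.B, φa (v y) = if y = a then 1 else 0 := by
    intro y
    by_cases hy : y = a
    · subst hy
      simp [hφa, hva, Finsupp.lapply_apply, bd_single_apply, hw]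
    · by_cases hy' : y = b
      · subst hy'
        simp [hφa, hvb, Finsupp.lapply_apply, Finsupp.single_apply, (Ne.symm hab), hy]
      · rw [if_neg hy, hφa, hvx y hy hy', map_sub, map_smul, Finsupp.lapply_apply,
          Finsupp.lapply_apply, Finsupp.single_apply, Finsupp.single_apply,
          if_neg (fun h : y = a => hy h), if_neg (fun h : b = a => hab h.symm)]
        simp
  have φb_basis : ∀ y : C.B, φb (v y) = if y = b then 1 else 0 := by
    intro y
    by_cases hy : y = a
    · subst hy
      rw [if_neg hab, φb_apply, Finset.sum_eq_zero]
      intro z _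
      rw [hva, bd_single_apply, hwbz _ z.2, mul_zero]
    · by_cases hy' : y = b
      · rw [if_pos hy', hy', φb_apply, hvb,
          Fintype.sum_eq_single (⟨b, rfl⟩ : {z : C.B // C.dim z = C.dim b})]
        · simp [hw]
        · intro z hz
          rw [Finsupp.single_apply, if_neg, mul_zero]
          exact fun h => hz (Subtype.ext h.symm)
      · rw [if_neg hy', φb_apply, hvx y hy hy']
        have step : ∀ z : {z : C.B // C.dim z = C.dim b},
            C.w (z : C.B) a * ((Finsupp.single y (1:R) - C.w y a • Finsupp.single b (1:R)) (z : C.B))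
            = C.w (z : C.B) a * (Finsupp.single y (1:R)) (z : C.B)
              - C.w y a * (C.w (z : C.B) a * (Finsupp.single b (1:R)) (z : C.B)) := by
          intro z
          rw [Finsupp.sub_apply, Finsupp.smul_apply, smul_eq_mul]
          ring
        rw [Finset.sum_congr rfl fun z _ => step z, Finset.sum_sub_distrib, ← Finset.mul_sum]
        have h2 : ∑ z : {z : C.B // C.dim z = C.dim b},
            C.w (z : C.B) a * (Finsupp.single b (1:R)) (z : C.B) = 1 := by
          rw [Fintype.sum_eq_single (⟨b, rfl⟩ : {z : C.B // C.dim z = C.dim b})]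
          · simp [hw]
          · intro z hz
            rw [Finsupp.single_apply, if_neg, mul_zero]
            exact fun h => hz (Subtype.ext h.symm)
        rw [h2, mul_one]
        by_cases hdy : C.dim y = C.dim b
        · rw [Fintype.sum_eq_single (⟨y, hdy⟩ : {z : C.B // C.dim z = C.dim b})]
          · simp [sub_self]
          · intro z hz
            rw [Finsupp.single_apply, if_neg, mul_zero]
            exact fun h => hz (Subtype.ext h.symm)
        · rw [Finset.sum_eq_zero, hwxa y hdy, sub_zero]
          intro z _
          rw [Finsupp.single_apply, if_neg, mul_zero]
          intro h
          exact hdy (h ▸ z.2)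
  -- repr coordinates are given by the functionals
  have coordA : ∀ c : C.B →₀ R, v.repr c a = φa c := by
    have : ((Finsupp.lapply a).comp (v.repr : (C.B →₀ R) →ₗ[R] (C.B →₀ R)) : (C.B →₀ R) →ₗ[R] R) = φa := by
      refine Module.Basis.ext v fun y => ?_
      rw [LinearMap.comp_apply, φa_basis y]
      simp [Module.Basis.repr_self, Finsupp.lapply_apply, Finsupp.single_apply]
    intro c
    exact LinearMap.congr_fun this c
  have coordB : ∀ c : C.B →₀ R, v.repr c b = φb c := by
    have : ((Finsupp.lapply b).comp (v.repr : (C.B →₀ R) →ₗ[R] (C.B →₀ R)) : (C.B →₀ R) →ₗ[R] R) = φb := by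
      refine Module.Basis.ext v fun y => ?_
      rw [LinearMap.comp_apply, φb_basis y]
      simp [Module.Basis.repr_self, Finsupp.lapply_apply, Finsupp.single_apply]
    intro c
    exact LinearMap.congr_fun this c
  -- the boundary of each remaining basis vector stays in the remaining span
  have key : ∀ x : C.B, x ≠ a → x ≠ b → C.bd (v x) ∈
      Submodule.span R (Set.range fun x : {x : C.B // x ≠ a ∧ x ≠ b} => v (x : C.B)) := by
    intro x hx1 hx2
    have hbdvx : C.bd (v x) = C.bd (Finsupp.single x 1) - C.w x a • C.bd (Finsupp.single b 1) := by
      rw [hvx x hx1 hx2, map_sub, map_smul]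
    have hra : v.repr (C.bd (v x)) a = 0 := by
      rw [coordA, hφa, hbdvx]
      simp only [map_sub, map_smul, Finsupp.lapply_apply, Finsupp.sub_apply, Finsupp.smul_apply]
      rw [bd_single_apply, bd_single_apply, hw, smul_eq_mul, mul_one, sub_self]
    have hrb : v.repr (C.bd (v x)) b = 0 := by
      rw [coordB, φb_apply, hbdvx]
      have step : ∀ z : {z : C.B // C.dim z = C.dim b},
          C.w (z : C.B) a *
            ((C.bd (Finsupp.single x 1) - C.w x a • C.bd (Finsupp.single b 1)) (z : C.B))
          = C.w (z : C.B) a * C.w x (z : C.B)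
            - C.w x a * (C.w (z : C.B) a * C.w b (z : C.B)) := by
        intro z
        rw [Finsupp.sub_apply, Finsupp.smul_apply, bd_single_apply, bd_single_apply,
          smul_eq_mul]
        ring
      rw [Finset.sum_congr rfl fun z _ => step z, Finset.sum_sub_distrib]
      have h2 : ∑ z : {z : C.B // C.dim z = C.dim b},
          C.w x a * (C.w (z : C.B) a * C.w b (z : C.B)) = 0 := by
        refine Finset.sum_eq_zero fun z _ => ?_
        rw [hwbz _ z.2, mul_zero, mul_zero]
      rw [h2, sub_zero]
      by_cases h : C.dim x - 1 = C.dim b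
      · rw [← Fintype.sum_equiv (Equiv.subtypeEquivRight fun z : C.B => by rw [h] :
            {z : C.B // C.dim z = C.dim x - 1} ≃ {z : C.B // C.dim z = C.dim b})
          (fun z => C.w x (z : C.B) * C.w (z : C.B) a)
          (fun z => C.w (z : C.B) a * C.w x (z : C.B))
          (fun z => by rw [Equiv.subtypeEquivRight_apply]; exact mul_comm _ _)]
        exact C.dsq x a
      · refine Finset.sum_eq_zero fun z _ => ?_
        have : C.w x (z : C.B) = 0 := by
          by_contra hne
          have := C.w_dim x (z : C.B) hne
          rw [z.2] at this
          exact h this.symm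
        rw [this, mul_zero]
    -- expand in the basis and use the vanishing coordinates
    have htot := Module.Basis.linearCombination_repr v (C.bd (v x))
    rw [Finsupp.linearCombination_apply] at htot
    rw [← htot]
    apply Submodule.finsuppSum_mem
    intro i hi
    have hia : i ≠ a := fun h => hi (h ▸ hra)
    have hib : i ≠ b := fun h => hi (h ▸ hrb)
    exact Submodule.smul_mem _ _ (Submodule.subset_span ⟨⟨i, hia, hib⟩, rfl⟩)
  -- assemble
  have part1 : C.bd (v b) = v a := by rw [hvb, hva]
  have part2 : C.bd (v a) = 0 := by rw [hva]; exact bd_bd C b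
  refine ⟨part1, part2, ?_, ?_, ?_⟩
  · rw [Submodule.map_span_le]
    rintro m (rfl | rfl)
    · rw [part2]; exact Submodule.zero_mem _
    · rw [part1]; exact Submodule.subset_span (Set.mem_insert _ _)
  · rw [Submodule.map_span_le]
    rintro _ ⟨⟨x, hx1, hx2⟩, rfl⟩
    exact key x hx1 hx2
  · have h1 : ({v a, v b} : Set (C.B →₀ R)) = ⇑v '' {a, b} := by
      rw [Set.image_insert_eq, Set.image_singleton]
    have h3 : {x : C.B | x ≠ a ∧ x ≠ b} = ({a, b} : Set C.B)ᶜ := by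
      ext x; simp [not_or]
    have h2 : (Set.range fun x : {x : C.B // x ≠ a ∧ x ≠ b} => v (x : C.B))
        = ⇑v '' (({a, b} : Set C.B)ᶜ) := by
      rw [← h3]
      exact (Set.image_eq_range _ _).symm
    rw [h1, h2]
    constructor
    · exact v.linearIndependent.disjoint_span_image disjoint_compl_right
    · rw [codisjoint_iff, ← Submodule.span_union, ← Set.image_union,
        Set.union_compl_self, Set.image_univ, Module.Basis.span_eq]
end

section
/- Following an alternating cycle d(b₁) ≺ b₁ ≻ d(b₂) ≺ ... ≺ bₙ ≻ d(b₁) left to right strictly decreases position in any linear extension L in which u(a) directly follows a: each step up (d(bᵢ) ≺ bᵢ) is followed by a step down of at least two positions, yielding a contradiction; hence no such cycle exists when such a linear extension exists. -/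
/-- If there is a linear extension in which each `u(a)` directly follows `a`, then
following an alternating cycle strictly decreases position in the extension (each step
up is followed by a step at least two positions down), a contradiction: no alternating
cycle exists. -/
theorem no_cycle_of_adjacent_linear_extension {α : Type} [Fintype α] [DecidableEq α]
    [PartialOrder α] (rk : α → ℕ) (hrk : ∀ a b : α, a ⋖ b → rk b = rk a + 1)
    (M : Finset (α × α)) (hM : PosetMatching M)
    (ι : α ≃ Fin (Fintype.card α)) (hlin : IsLinearExtension ι)
    (hadj : ∀ p ∈ M, (ι p.2 : ℕ) = (ι p.1 : ℕ) + 1) :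
    ¬ PosetHasAltCycle M := by
  rintro ⟨n, f, hinj, hmem, hcov⟩
  have hstep : ∀ i : Fin (n + 2), (ι (f (i + 1)).1 : ℕ) < (ι (f i).1 : ℕ) := by
    intro i
    have hc := hcov i
    have hle : (ι (f (i + 1)).1 : ℕ) ≤ (ι (f i).2 : ℕ) := hlin _ _ hc.le
    have hlt : (ι (f (i + 1)).1 : ℕ) < (ι (f i).2 : ℕ) := by
      rcases lt_or_eq_of_le hle with h | h
      · exact h
      · exact absurd (ι.injective (Fin.ext h)) hc.lt.ne
    rw [hadj _ (hmem i)] at hlt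
    have hle' : (ι (f (i + 1)).1 : ℕ) ≤ (ι (f i).1 : ℕ) := Nat.lt_succ_iff.mp hlt
    rcases lt_or_eq_of_le hle' with h | h
    · exact h
    · exfalso
      have heq : (f (i + 1)).1 = (f i).1 := ι.injective (Fin.ext h)
      have hne : f (i + 1) ≠ f i := by
        intro he
        have h2 : i + 1 = i + 0 := by simpa using hinj he
        have h3 : (1 : Fin (n + 2)) = 0 := add_left_cancel h2
        exact one_ne_zero h3
      exact (hM.2 _ (hmem (i + 1)) _ (hmem i) hne).1 heq
  open Fin.NatCast in
  set g : ℕ → ℕ := fun k => (ι (f ((k : ℕ) : Fin (n + 2))).1 : ℕ) with hg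
  open Fin.NatCast in
  have hsucc : ∀ k : ℕ, g (k + 1) < g k := by
    intro k
    have hc : (((k + 1 : ℕ)) : Fin (n + 2)) = ((k : ℕ) : Fin (n + 2)) + 1 := by
      push_cast; ring
    simpa [hg, hc] using hstep ((k : ℕ) : Fin (n + 2))
  have hanti : StrictAnti g := strictAnti_nat_of_succ_lt hsucc
  have hlt : g (n + 2) < g 0 := hanti (by omega)
  open Fin.NatCast in
  have heq : g (n + 2) = g 0 := by
    simp [hg, Fin.natCast_self]
  omega
end
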